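/- Let x and z be rational numbers. The point (x, z/2) is at rational distance from both (0, 1/2) and (0, -1/2) if and only if the polynomial p(u) = u^4 - (z^2 + 4x^2 + 1)u^2 + z^2 has a nonzero rational root. -/

import Mathlib

lemma sqrt_eq_rat_of_sq (q : ℚ) (A : ℝ) (h : (q : ℝ) ^ 2 = A) :
    ∃ r : ℚ, Real.sqrt A = r := by
  refine ⟨|q|, ?_⟩
  rw [← h, Real.sqrt_sq_eq_abs]
  push_cast
  ring

theorem two_distance_iff_rational_root (x z : ℚ) :
    ((∃ r : ℚ, Real.sqrt ((x : ℝ) ^ 2 + ((z : ℝ) / 2 - 1 / 2) ^ 2) = r) ∧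
      (∃ r : ℚ, Real.sqrt ((x : ℝ) ^ 2 + ((z : ℝ) / 2 + 1 / 2) ^ 2) = r)) ↔
    (∃ u : ℚ, u ≠ 0 ∧ u ^ 4 - (z ^ 2 + 4 * x ^ 2 + 1) * u ^ 2 + z ^ 2 = 0) := by
  constructor
  · rintro ⟨⟨r, hr⟩, ⟨s, hs⟩⟩
    have hA : (0:ℝ) ≤ (x : ℝ) ^ 2 + ((z : ℝ) / 2 - 1 / 2) ^ 2 := by positivity
    have hB : (0:ℝ) ≤ (x : ℝ) ^ 2 + ((z : ℝ) / 2 + 1 / 2) ^ 2 := by positivity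
    have hr2 : ((r : ℝ)) ^ 2 = (x : ℝ) ^ 2 + ((z : ℝ) / 2 - 1 / 2) ^ 2 := by
      rw [← hr]; exact Real.sq_sqrt hA
    have hs2 : ((s : ℝ)) ^ 2 = (x : ℝ) ^ 2 + ((z : ℝ) / 2 + 1 / 2) ^ 2 := by
      rw [← hs]; exact Real.sq_sqrt hB
    have hra : r ^ 2 = x ^ 2 + (z / 2 - 1 / 2) ^ 2 := by
      apply Rat.cast_injective (α := ℝ)
      push_cast
      linear_combination hr2
    have hsa : s ^ 2 = x ^ 2 + (z / 2 + 1 / 2) ^ 2 := by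
      apply Rat.cast_injective (α := ℝ)
      push_cast
      linear_combination hs2
    set a := |r| with ha0
    set b := |s| with hb0
    have ha : a ^ 2 = x ^ 2 + (z / 2 - 1 / 2) ^ 2 := by rw [ha0, sq_abs]; exact hra
    have hb : b ^ 2 = x ^ 2 + (z / 2 + 1 / 2) ^ 2 := by rw [hb0, sq_abs]; exact hsa
    have hanneg : 0 ≤ a := abs_nonneg r
    have hbnneg : 0 ≤ b := abs_nonneg s
    have hab : a + b ≠ 0 := by
      intro h
      have ha' : a = 0 := le_antisymm (by linarith) hanneg
      have hb' : b = 0 := le_antisymm (by linarith) hbnneg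
      rw [ha'] at ha; rw [hb'] at hb
      nlinarith [sq_nonneg x, sq_nonneg z]
    refine ⟨a + b, hab, ?_⟩
    linear_combination (2*(a+b)^2 + b^2 - a^2 + z) * ha + (2*(a+b)^2 - b^2 + a^2 - z) * hb
  · rintro ⟨u, hu0, hu⟩
    have hu' : (u:ℝ) ^ 4 - ((z:ℝ) ^ 2 + 4 * (x:ℝ) ^ 2 + 1) * (u:ℝ) ^ 2 + (z:ℝ) ^ 2 = 0 := by
      exact_mod_cast hu
    have hu0' : (u:ℝ) ≠ 0 := by exact_mod_cast hu0
    constructor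
    · refine sqrt_eq_rat_of_sq ((u - z / u) / 2) _ ?_
      push_cast
      field_simp
      linear_combination hu'
    · refine sqrt_eq_rat_of_sq ((u + z / u) / 2) _ ?_
      push_cast
      field_simp
      linear_combination hu'
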